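/- Let Q ⊂ ℝ^n be a full-dimensional simplicial convex polytope with 0 in its interior. Let v ∈ V(Q*) and let e_1,…,e_n be the n vertices of F_v; they form a basis of ℝ^n, with dual basis (e_1*,…,e_n*) of (ℝ^n)*. For j ∈ {1,…,n}, let F_j be the unique facet of Q distinct from F_v containing all e_i with i ≠ j, let u^j be the vertex of F_j not belonging to {e_i : i ≠ j}, and let v^j ∈ V(Q*) be the vertex of Q* corresponding to F_j. Then u^j ∉ {e_1,…,e_n}, ⟨e_j*,u^j⟩ < 0, the number γ_j := (−1−⟨v,u^j⟩)/⟨e_j*,u^j⟩ is strictly positive, and v^j = v + γ_j e_j*. -/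

import Mathlib

open Matrix

/-- The polar dual `Q* = {v | ⟨v,u⟩ ≥ -1 for all u ∈ Q}`. -/
def polarDual {n : ℕ} (Q : Set (Fin n → ℝ)) : Set (Fin n → ℝ) :=
  {v | ∀ u ∈ Q, -1 ≤ v ⬝ᵥ u}

/-- Let `v ∈ V(Q*)`, let `e_1, …, e_n` be the vertices of `F_v` (a basis of
`ℝ^n` with dual basis `e_1*, …, e_n*`).  For `j`, let `F_j` (with corresponding dual vertex
`v^j`) be the facet of `Q` distinct from `F_v` containing all `e_i`, `i ≠ j`, and let `u^j` be
the vertex of `F_j` not among `{e_i : i ≠ j}`.  Then `u^j ∉ {e_1, …, e_n}`, `⟨e_j*, u^j⟩ < 0`,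
`γ_j := (-1 - ⟨v, u^j⟩)/⟨e_j*, u^j⟩ > 0`, and `v^j = v + γ_j e_j*`. -/
theorem adjacent_facet_dual_vertex {n : ℕ} (hn : 1 ≤ n)
    (VQ VQd : Finset (Fin n → ℝ))
    -- `VQ` is the vertex set of the polytope `Q = conv(VQ)`
    (hVQ : (VQ : Set (Fin n → ℝ)) =
      Set.extremePoints ℝ (convexHull ℝ (VQ : Set (Fin n → ℝ))))
    -- `0` lies in the interior of `Q` (in particular `Q` is full-dimensional)
    (h0 : (0 : Fin n → ℝ) ∈ interior (convexHull ℝ (VQ : Set (Fin n → ℝ))))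
    -- `VQd` is the vertex set of the polar dual `Q*`
    (hVQd : (VQd : Set (Fin n → ℝ)) =
      Set.extremePoints ℝ (polarDual (convexHull ℝ (VQ : Set (Fin n → ℝ)))))
    -- `Q` is simplicial: every facet has exactly `n` vertices
    (hsimp : ∀ v ∈ VQd, (VQ.filter fun u => v ⬝ᵥ u = -1).card = n)
    -- fix `v ∈ V(Q*)`
    (v : Fin n → ℝ) (hv : v ∈ VQd)
    -- `e_1, …, e_n` are the vertices of the facet `F_v`
    (e : Fin n → (Fin n → ℝ)) (he : Function.Injective e)
    (heV : ∀ i, e i ∈ VQ) (heF : ∀ i, v ⬝ᵥ e i = -1)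
    (heAll : ∀ u ∈ VQ, v ⬝ᵥ u = -1 → ∃ i, u = e i)
    -- `(e_1*, …, e_n*)` is the dual basis of `(e_1, …, e_n)`
    (estar : Fin n → (Fin n → ℝ))
    (hestar : ∀ i k, estar i ⬝ᵥ e k = if i = k then 1 else 0)
    -- fix `j` and let `F_j` (with dual vertex `v^j ∈ V(Q*)`) be the facet of `Q`,
    -- distinct from `F_v`, containing all `e_i` with `i ≠ j`
    (j : Fin n) (vj : Fin n → ℝ) (hvj : vj ∈ VQd) (hvjne : vj ≠ v)
    (hvje : ∀ i, i ≠ j → vj ⬝ᵥ e i = -1)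
    -- `u^j` is the vertex of `F_j` not belonging to `{e_i : i ≠ j}`
    (uj : Fin n → ℝ) (hujV : uj ∈ VQ) (hujF : vj ⬝ᵥ uj = -1)
    (hujne : ∀ i, i ≠ j → uj ≠ e i) :
    uj ∉ Set.range e ∧
    estar j ⬝ᵥ uj < 0 ∧
    0 < (-1 - v ⬝ᵥ uj) / (estar j ⬝ᵥ uj) ∧
    vj = v + ((-1 - v ⬝ᵥ uj) / (estar j ⬝ᵥ uj)) • estar j := by
  classical
  -- membership facts
  have hdual : ∀ w ∈ VQd, ∀ u ∈ VQ, -1 ≤ w ⬝ᵥ u := by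
    intro w hw u hu
    have hw' : w ∈ Set.extremePoints ℝ
        (polarDual (convexHull ℝ (VQ : Set (Fin n → ℝ)))) := by
      rw [← hVQd]; exact_mod_cast hw
    exact hw'.1 u (subset_convexHull ℝ _ hu)
  -- matrix identities
  have hAB : (Matrix.of estar) * (Matrix.of e)ᵀ = 1 := by
    ext i k
    have := hestar i k
    simpa [Matrix.mul_apply, dotProduct, Matrix.one_apply] using this
  have hBA : (Matrix.of e)ᵀ * (Matrix.of estar) = 1 := mul_eq_one_comm.mp hAB
  have hBA' : ∀ l m, ∑ i, e i l * estar i m = if l = m then 1 else 0 := by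
    intro l m
    have := congrFun (congrFun hBA l) m
    simpa [Matrix.mul_apply, Matrix.one_apply] using this
  -- any covector is determined by its values on the basis `e`
  have key1 : ∀ a : Fin n → ℝ, ∀ m, ∑ i, (a ⬝ᵥ e i) * estar i m = a m := by
    intro a m
    simp only [dotProduct, Finset.sum_mul]
    rw [Finset.sum_comm]
    have h1 : ∀ l, ∑ i, a l * e i l * estar i m = a l * (if l = m then 1 else 0) := by
      intro l
      rw [← hBA' l m, Finset.mul_sum]
      exact Finset.sum_congr rfl fun i _ => by ring
    calc ∑ l, ∑ i, a l * e i l * estar i m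
        = ∑ l, a l * (if l = m then 1 else 0) := Finset.sum_congr rfl fun l _ => h1 l
      _ = a m := by simp
  have detEq : ∀ a b : Fin n → ℝ, (∀ i, a ⬝ᵥ e i = b ⬝ᵥ e i) → a = b := by
    intro a b hab
    funext m
    rw [← key1 a m, ← key1 b m]
    exact Finset.sum_congr rfl fun i _ => by rw [hab i]
  -- pairing through the basis
  have hCA : (Matrix.of estar)ᵀ * (Matrix.of e) = 1 := by
    have := congrArg Matrix.transpose hBA
    rwa [Matrix.transpose_mul, Matrix.transpose_transpose, Matrix.transpose_one] at this
  have hCA' : ∀ l m, ∑ i, estar i l * e i m = if l = m then 1 else 0 := by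
    intro l m
    have := congrFun (congrFun hCA l) m
    simpa [Matrix.mul_apply, Matrix.one_apply] using this
  have key2 : ∀ u : Fin n → ℝ, ∀ m, ∑ i, (estar i ⬝ᵥ u) * e i m = u m := by
    intro u m
    simp only [dotProduct, Finset.sum_mul]
    rw [Finset.sum_comm]
    have h1 : ∀ l, ∑ i, estar i l * u l * e i m = u l * (if l = m then 1 else 0) := by
      intro l
      rw [← hCA' l m, Finset.mul_sum]
      exact Finset.sum_congr rfl fun i _ => by ring
    calc ∑ l, ∑ i, estar i l * u l * e i m
        = ∑ l, u l * (if l = m then 1 else 0) := Finset.sum_congr rfl fun l _ => h1 l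
      _ = u m := by simp
  have key3 : ∀ w u : Fin n → ℝ, w ⬝ᵥ u = ∑ i, (estar i ⬝ᵥ u) * (w ⬝ᵥ e i) := by
    intro w u
    have : ∀ i, (estar i ⬝ᵥ u) * (w ⬝ᵥ e i) = ∑ m, w m * ((estar i ⬝ᵥ u) * e i m) := by
      intro i
      simp only [dotProduct, Finset.mul_sum]
      exact Finset.sum_congr rfl fun m _ => by ring
    simp only [this]
    rw [Finset.sum_comm, dotProduct]
    refine Finset.sum_congr rfl fun m _ => ?_
    rw [← key2 u m, Finset.mul_sum]
  -- `uj` is not among the `e i`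
  have huj_ne : uj ∉ Set.range e := by
    rintro ⟨i, rfl⟩
    by_cases hij : i = j
    · subst hij
      apply hvjne
      apply detEq
      intro k
      by_cases hkj : k = i
      · rw [hkj, hujF, heF]
      · rw [hvje k hkj, heF]
    · exact hujne i hij rfl
  have hvuj : -1 < v ⬝ᵥ uj := by
    rcases lt_or_eq_of_le (hdual v hv uj hujV) with h | h
    · exact h
    · exfalso
      obtain ⟨i, hi⟩ := heAll uj hujV h.symm
      exact huj_ne ⟨i, hi.symm⟩
  have ht : -1 < vj ⬝ᵥ e j := by
    rcases lt_or_eq_of_le (hdual vj hvj (e j) (heV j)) with h | h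
    · exact h
    · exfalso
      apply hvjne
      apply detEq
      intro k
      by_cases hkj : k = j
      · rw [hkj, ← h, heF]
      · rw [hvje k hkj, heF]
  set c : Fin n → ℝ := fun i => estar i ⬝ᵥ uj with hc
  set t : ℝ := vj ⬝ᵥ e j with htdef
  -- v ⬝ᵥ uj = -∑ c i
  have hv_uj : v ⬝ᵥ uj = -∑ i, c i := by
    rw [key3 v uj]
    simp [heF, Finset.sum_neg_distrib]
    rfl
  have hvj_uj : vj ⬝ᵥ uj = (∑ i ∈ Finset.univ.erase j, c i * (-1)) + c j * t := by
    rw [key3 vj uj, ← Finset.sum_erase_add _ _ (Finset.mem_univ j)]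
    congr 1
    exact Finset.sum_congr rfl fun i hi => by
      rw [hvje i (Finset.ne_of_mem_erase hi)]
  have hsum : ∑ i ∈ Finset.univ.erase j, c i = (∑ i, c i) - c j := by
    rw [← Finset.sum_erase_add _ _ (Finset.mem_univ j)]; ring
  -- key scalar identity : c j * (t + 1) = -1 - v ⬝ᵥ uj
  have hkey : c j * (t + 1) = -1 - v ⬝ᵥ uj := by
    have h1 : ∑ i ∈ Finset.univ.erase j, c i * (-1) = -((∑ i, c i) - c j) := by
      rw [← hsum]; simp
    have h2 : -((∑ i, c i) - c j) + c j * t = -1 := by rw [← h1, ← hvj_uj, hujF]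
    linear_combination h2 + hv_uj
  have hkeyneg : c j * (t + 1) < 0 := by rw [hkey]; linarith
  have htpos : 0 < t + 1 := by linarith
  have hcj : c j < 0 := by nlinarith
  refine ⟨huj_ne, hcj, ?_, ?_⟩
  · apply div_pos_of_neg_of_neg
    · linarith
    · exact hcj
  · have hγ : (-1 - v ⬝ᵥ uj) / (estar j ⬝ᵥ uj) = t + 1 := by
      rw [← hkey]
      exact mul_div_cancel_left₀ _ (ne_of_lt hcj)
    rw [hγ]
    apply detEq
    intro i
    have hadd : (v + (t + 1) • estar j) ⬝ᵥ e i = v ⬝ᵥ e i + (t + 1) * (estar j ⬝ᵥ e i) := by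
      simp [add_dotProduct, smul_dotProduct, smul_eq_mul]
    rw [hadd, heF, hestar]
    by_cases hij : j = i
    · rw [if_pos hij, ← hij, ← htdef]; ring
    · rw [if_neg hij]
      rw [hvje i (fun h => hij h.symm)]
      ring
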